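/- For every integer k ≥ 2, the edge-coloring f of the prism C_{2k} □ C_2 defined by: f({i0, i1}) = k for all i; f({ij, (i+1)j}) = i for 0 ≤ i ≤ k−1; f({ij, (i+1)j}) = i − k for k ≤ i ≤ 2k−2; and f({(2k−1)j, 0j}) = k−1 (j ∈ {0,1}), is a strong rainbow coloring using k+1 colors. -/

import Mathlib

open SimpleGraph Finset

/-- A coloring `c` of (potential) edges is a rainbow coloring of `G` if every pair of
distinct vertices is joined by a path whose edges have pairwise distinct colors. -/
def SimpleGraph.IsRainbowColoring {V α : Type*} (G : SimpleGraph V) (c : Sym2 V → α) : Prop :=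
  ∀ u v : V, u ≠ v → ∃ p : G.Walk u v, p.IsPath ∧ (p.edges.map c).Nodup

/-- A strong rainbow coloring: every pair of distinct vertices is joined by a rainbow
path whose length equals the distance between them. -/
def SimpleGraph.IsStrongRainbowColoring {V α : Type*} (G : SimpleGraph V) (c : Sym2 V → α) : Prop :=
  ∀ u v : V, u ≠ v → ∃ p : G.Walk u v, p.IsPath ∧ p.length = G.dist u v ∧ (p.edges.map c).Nodup

/-- The rainbow connection number: least number of colors of a rainbow coloring. -/
noncomputable def SimpleGraph.rc {V : Type*} (G : SimpleGraph V) : ℕ :=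
  sInf {k : ℕ | ∃ c : Sym2 V → Fin k, G.IsRainbowColoring c}

/-- The strong rainbow connection number: least number of colors of a strong rainbow coloring. -/
noncomputable def SimpleGraph.src {V : Type*} (G : SimpleGraph V) : ℕ :=
  sInf {k : ℕ | ∃ c : Sym2 V → Fin k, G.IsStrongRainbowColoring c}

/-- The toroidal mesh `C_{n 0} □ ⋯ □ C_{n (r-1)}`: the Cartesian (box) product of the
cycles `cycleGraph (n i)`. -/
def toroidalMesh {r : ℕ} (n : Fin r → ℕ) : SimpleGraph (∀ i, Fin (n i)) :=
  SimpleGraph.fromRel fun u v =>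
    ∃ i, (cycleGraph (n i)).Adj (u i) (v i) ∧ ∀ j, j ≠ i → u j = v j

namespace Aux
variable {n : ℕ}
def δ (i j : Fin n) : ℕ := (j - i).val

lemma delta_eq (i j : Fin n) :
    δ i j = if (i : ℕ) ≤ (j : ℕ) then (j : ℕ) - (i : ℕ) else n + (j : ℕ) - (i : ℕ) := by
  have hi := i.isLt; have hj := j.isLt
  unfold δ
  rw [Fin.sub_def]
  rcases le_or_gt (i : ℕ) (j : ℕ) with h | h
  · rw [if_pos h]
    show ((n - (i : ℕ)) + (j : ℕ)) % n = _
    rw [Nat.mod_eq_sub_mod (by omega), Nat.mod_eq_of_lt (by omega)]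
    omega
  · rw [if_neg (by omega)]
    show ((n - (i : ℕ)) + (j : ℕ)) % n = _
    rw [Nat.mod_eq_of_lt (by omega)]
    omega

lemma delta_lt (i j : Fin n) : δ i j < n := (j - i).isLt

lemma delta_self (i : Fin n) : δ i i = 0 := by rw [delta_eq]; simp

lemma delta_eq_zero_iff (i j : Fin n) : δ i j = 0 ↔ i = j := by
  have hi := i.isLt; have hj := j.isLt
  rw [delta_eq, Fin.ext_iff]
  split <;> omega

lemma delta_add_delta (i j : Fin n) :
    (δ i j = 0 ∧ δ j i = 0) ∨ δ i j + δ j i = n := by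
  rcases eq_or_ne i j with rfl | h
  · left; simp [delta_self]
  · right
    have hij : (i : ℕ) ≠ (j : ℕ) := fun hh => h (Fin.ext hh)
    have hi := i.isLt; have hj := j.isLt
    rw [delta_eq, delta_eq]
    split <;> split <;> omega

variable [NeZero n]

lemma val_one2 (hn2 : 2 ≤ n) : ((1 : Fin n) : ℕ) = 1 := by
  rw [Fin.val_one']
  exact Nat.mod_eq_of_lt (by omega)

lemma val_add_one' (hn2 : 2 ≤ n) (x : Fin n) : ((x + 1 : Fin n) : ℕ) = ((x : ℕ) + 1) % n := by
  rw [Fin.add_def, val_one2 hn2]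

lemma delta_succ_left (hn2 : 2 ≤ n) (x j : Fin n) :
    δ (x + 1) j = if δ x j = 0 then n - 1 else δ x j - 1 := by
  have h : j - (x + 1) = (j - x) - 1 := by abel
  simp only [δ] at *
  rw [h]
  have h2 : (((j - x) - 1 : Fin n) : ℕ) = δ (1 : Fin n) (j - x) := rfl
  rw [h2, delta_eq, val_one2 hn2]
  have h4 := (j - x).isLt
  split <;> by_cases hz : ((j - x : Fin n) : ℕ) = 0 <;> simp only [hz, if_true, if_false] <;> omega

lemma delta_succ_right (hn2 : 2 ≤ n) (x j : Fin n) :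
    δ j (x + 1) = if δ j x = n - 1 then 0 else δ j x + 1 := by
  have h : (x + 1) - j = (x - j) + 1 := by abel
  simp only [δ] at *
  rw [h, val_add_one' hn2]
  have h4 := (x - j).isLt
  rcases eq_or_ne ((x - j : Fin n) : ℕ) (n - 1) with he | he
  · simp only [he, if_true]
    have hone : n - 1 + 1 = n := by omega
    rw [hone, Nat.mod_self]
  · simp only [he, if_false]
    rw [Nat.mod_eq_of_lt (by omega)]

lemma delta_triangle (x w z : Fin n) : δ x z ≤ δ x w + δ w z := by
  have h : (z - w) + (w - x) = z - x := sub_add_sub_cancel z w x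
  simp only [δ]
  rw [← h, Fin.add_def]
  calc (((z - w : Fin n) : ℕ) + ((w - x : Fin n) : ℕ)) % n ≤ _ := Nat.mod_le _ _
  _ = δ x w + δ w z := by rw [Nat.add_comm]; rfl


def cd (i j : Fin n) : ℕ := min (δ i j) (δ j i)

def D (u v : Fin n × Fin 2) : ℕ := cd u.1 v.1 + (if u.2 = v.2 then 0 else 1)

lemma cd_succ (hn2 : 2 ≤ n) (x j : Fin n) :
    cd x j ≤ cd (x + 1) j + 1 ∧ cd (x + 1) j ≤ cd x j + 1 := by
  have hA := delta_lt x j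
  have hB := delta_lt j x
  unfold cd
  rw [delta_succ_left hn2, delta_succ_right hn2]
  rcases delta_add_delta x j with ⟨h1, h2⟩ | hsum <;> split_ifs <;> omega

lemma adj_succ (hn2 : 2 ≤ n) (x : Fin n) (b : Fin 2) :
    (cycleGraph n □ cycleGraph 2).Adj (x, b) (x + 1, b) := by
  refine boxProd_adj_left.mpr (cycleGraph_adj'.mpr (Or.inr ?_))
  have h : (x + 1) - x = 1 := by abel
  rw [h, val_one2 hn2]

lemma adj_vert (x : Fin n) {a b : Fin 2} (hab : a ≠ b) :
    (cycleGraph n □ cycleGraph 2).Adj (x, a) (x, b) := by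
  refine boxProd_adj_right.mpr ?_
  rw [cycleGraph_two_eq_top]
  exact hab

lemma D_lip (hn2 : 2 ≤ n) {u w : Fin n × Fin 2}
    (h : (cycleGraph n □ cycleGraph 2).Adj u w) (v : Fin n × Fin 2) :
    D u v ≤ D w v + 1 := by
  rcases boxProd_adj.mp h with ⟨ha, h2⟩ | ⟨hb, h1⟩
  · rcases cycleGraph_adj'.mp ha with hh | hh
    · have : u.1 - w.1 = 1 := Fin.ext (by rw [val_one2 hn2]; exact hh)
      have hu : u.1 = w.1 + 1 := by rw [← this]; abel
      have := (cd_succ hn2 w.1 v.1).2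
      unfold D
      rw [hu, h2]
      omega
    · have : w.1 - u.1 = 1 := Fin.ext (by rw [val_one2 hn2]; exact hh)
      have hw : w.1 = u.1 + 1 := by rw [← this]; abel
      have := (cd_succ hn2 u.1 v.1).1
      unfold D
      rw [hw, h2]
      omega
  · unfold D
    rw [h1]
    split_ifs <;> omega

lemma length_lower (hn2 : 2 ≤ n) {u v : Fin n × Fin 2}
    (p : (cycleGraph n □ cycleGraph 2).Walk u v) : D u v ≤ p.length := by
  induction p with
  | nil => simp [D, cd, delta_self]
  | @cons a b c h q ih =>
    rw [Walk.length_cons]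
    have := D_lip hn2 h c
    omega

lemma dist_eq_of (hn2 : 2 ≤ n) {u v : Fin n × Fin 2}
    (p : (cycleGraph n □ cycleGraph 2).Walk u v) (hp : p.length = D u v) :
    (cycleGraph n □ cycleGraph 2).dist u v = p.length := by
  refine le_antisymm (dist_le p) ?_
  obtain ⟨q, hq⟩ := p.reachable.exists_walk_length_eq_dist
  rw [hp, ← hq]
  exact length_lower hn2 q


lemma succ_mod {n x : ℕ} (hx : x < n) : (x + 1) % n = if x + 1 = n then 0 else x + 1 := by
  split
  · rw [‹x + 1 = n›, Nat.mod_self]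
  · exact Nat.mod_eq_of_lt (by omega)

end Aux

namespace Aux2
open Aux

variable {k : ℕ}

abbrev colFun (k : ℕ) (u v : Fin (2 * k) × Fin 2) : ℕ :=
  if u.1 = v.1 then k
  else if ((u.1 : ℕ) + 1) % (2 * k) = (v.1 : ℕ) then (u.1 : ℕ) % k
  else if ((v.1 : ℕ) + 1) % (2 * k) = (u.1 : ℕ) then (v.1 : ℕ) % k
  else 0

variable (c : Sym2 (Fin (2 * k) × Fin 2) → ℕ)
variable (hc : ∀ u v : Fin (2 * k) × Fin 2, c s(u, v) = colFun k u v)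

section withc
include hc

lemma c_vert (x : Fin (2 * k)) (a b : Fin 2) : c s((x, a), (x, b)) = k := by
  rw [hc]; simp [colFun]

lemma c_horiz [NeZero (2 * k)] (hk : 2 ≤ k) (x : Fin (2 * k)) (b : Fin 2) :
    c s((x, b), (x + 1, b)) = (x : ℕ) % k := by
  have hn2 : 2 ≤ 2 * k := by omega
  rw [hc]
  have h1 : x ≠ x + 1 := by
    intro h
    have h0 : (1 : Fin (2 * k)) = 0 := (left_eq_add.mp h)
    have := congrArg Fin.val h0
    rw [val_one2 hn2] at this
    simp at this
  simp only [colFun]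
  rw [if_neg h1, if_pos (val_add_one' hn2 x).symm]

end withc

lemma mod_mod (k x : ℕ) : x % (2 * k) % k = x % k :=
  Nat.mod_mod_of_dvd x (dvd_mul_left k 2)

lemma col_shift [NeZero (2 * k)] (hk : 2 ≤ k) (x : Fin (2 * k)) (t : ℕ) :
    (((x + 1 : Fin (2 * k)) : ℕ) + t) % k = ((x : ℕ) + 1 + t) % k := by
  have hn2 : 2 ≤ 2 * k := by omega
  rw [val_add_one' hn2, Nat.add_mod (((x : ℕ) + 1) % (2 * k)) t k, mod_mod,
    ← Nat.add_mod]

lemma colors_nodup (hk : 2 ≤ k) (x d : ℕ) (hd : d ≤ k) :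
    ((List.range d).map (fun t => (x + t) % k)).Nodup := by
  refine List.Nodup.map_on ?_ List.nodup_range
  intro t ht s hs h
  rw [List.mem_range] at ht hs
  have h1 : x + t ≡ x + s [MOD k] := h
  have h2 : t ≡ s [MOD k] := Nat.ModEq.add_left_cancel' x h1
  have h3 : t % k = s % k := h2
  rw [Nat.mod_eq_of_lt (by omega), Nat.mod_eq_of_lt (by omega)] at h3
  exact h3

section withc2
include hc

lemma horiz (hk : 2 ≤ k) (b : Fin 2) :
    ∀ d : ℕ, d ≤ k → ∀ x y : Fin (2 * k), δ x y = d →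
    ∃ p : (cycleGraph (2 * k) □ cycleGraph 2).Walk (x, b) (y, b),
      p.IsPath ∧ p.length = d ∧
      (∀ z ∈ p.support, z.2 = b ∧ δ x z.1 ≤ d) ∧
      p.edges.map c = (List.range d).map (fun t => ((x : ℕ) + t) % k) := by
  have hn2 : 2 ≤ 2 * k := by omega
  haveI : NeZero (2 * k) := ⟨by omega⟩
  intro d
  induction d with
  | zero =>
    intro _ x y hxy
    obtain rfl : x = y := (delta_eq_zero_iff x y).mp hxy
    refine ⟨Walk.nil, by simp, by simp, ?_, by simp⟩
    intro z hz
    rw [Walk.support_nil, List.mem_singleton] at hz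
    subst hz
    exact ⟨rfl, by rw [delta_self]⟩
  | succ d ih =>
    intro hd x y hxy
    have hstep : δ (x + 1) y = d := by
      rw [delta_succ_left hn2, hxy, if_neg (by omega)]
      omega
    obtain ⟨q, hq1, hq2, hq3, hq4⟩ := ih (by omega) (x + 1) y hstep
    have hxx1 : δ x (x + 1) = 1 := by
      rw [delta_succ_right hn2, delta_self, if_neg (by omega)]
    refine ⟨Walk.cons (adj_succ hn2 x b) q, ?_, ?_, ?_, ?_⟩
    · rw [Walk.cons_isPath_iff]
      refine ⟨hq1, fun hmem => ?_⟩
      obtain ⟨-, hδ⟩ := hq3 _ hmem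
      have hδ' : δ (x + 1) x ≤ d := hδ
      have hbig : δ (x + 1) x = 2 * k - 1 := by
        rw [delta_succ_left hn2, delta_self, if_pos rfl]
      omega
    · rw [Walk.length_cons, hq2]
    · intro z hz
      rw [Walk.support_cons, List.mem_cons] at hz
      rcases hz with rfl | hz
      · exact ⟨rfl, by rw [delta_self]; omega⟩
      · obtain ⟨h1, h2⟩ := hq3 z hz
        have := delta_triangle x (x + 1) z.1
        exact ⟨h1, by omega⟩
    · rw [Walk.edges_cons, List.map_cons, hq4, c_horiz c hc hk,
        List.range_succ_eq_map, List.map_cons]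
      have hpt : ∀ t : ℕ, (fun t => (((x + 1 : Fin (2 * k)) : ℕ) + t) % k) t
          = ((fun t => ((x : ℕ) + t) % k) ∘ Nat.succ) t := by
        intro t
        show (((x + 1 : Fin (2 * k)) : ℕ) + t) % k = ((x : ℕ) + Nat.succ t) % k
        rw [col_shift hk]
        congr 1
        omega
      rw [List.map_map, List.map_congr_left fun a _ => hpt a]
      simp

lemma half (hk : 2 ≤ k) {u v : Fin (2 * k) × Fin 2} (hne : u ≠ v)
    (hle : δ u.1 v.1 ≤ k) :
    ∃ p : (cycleGraph (2 * k) □ cycleGraph 2).Walk u v,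
      p.IsPath ∧ p.length = D u v ∧ (p.edges.map c).Nodup := by
  obtain ⟨i, a⟩ := u; obtain ⟨j, b⟩ := v
  simp only at hle
  have hn2 : 2 ≤ 2 * k := by omega
  haveI : NeZero (2 * k) := ⟨by omega⟩
  have hcd : cd i j = δ i j := by
    unfold cd
    rcases delta_add_delta i j with ⟨h1, h2⟩ | hsum <;> omega
  obtain ⟨q, hq1, hq2, hq3, hq4⟩ := horiz c hc hk b (δ i j) hle i j rfl
  have hqnodup : (q.edges.map c).Nodup := by
    rw [hq4]; exact colors_nodup hk _ _ hle
  have hqlt : ∀ m ∈ q.edges.map c, m < k := by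
    rw [hq4]
    intro m hm
    rw [List.mem_map] at hm
    obtain ⟨t, _, rfl⟩ := hm
    exact Nat.mod_lt _ (by omega)
  rcases eq_or_ne a b with rfl | hab
  · refine ⟨q, hq1, ?_, hqnodup⟩
    rw [hq2]
    unfold D
    simp [hcd]
  · refine ⟨Walk.cons (adj_vert i hab) q, ?_, ?_, ?_⟩
    · rw [Walk.cons_isPath_iff]
      refine ⟨hq1, fun hmem => hab ?_⟩
      exact ((hq3 _ hmem).1 : a = b)
    · rw [Walk.length_cons, hq2]
      unfold D
      simp only [hcd]
      rw [if_neg hab]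
    · rw [Walk.edges_cons, List.map_cons, c_vert c hc, List.nodup_cons]
      exact ⟨fun hmem => absurd (hqlt _ hmem) (by omega), hqnodup⟩

end withc2


lemma colFun_symm (hk : 2 ≤ k) (u v : Fin (2 * k) × Fin 2) :
    colFun k u v = colFun k v u := by
  simp only [colFun]
  rcases eq_or_ne u.1 v.1 with h | h
  · rw [if_pos h, if_pos h.symm]
  · rw [if_neg h, if_neg (Ne.symm h)]
    have hu := u.1.isLt
    have hv := v.1.isLt
    have key : ¬ (((u.1 : ℕ) + 1) % (2 * k) = (v.1 : ℕ) ∧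
        ((v.1 : ℕ) + 1) % (2 * k) = (u.1 : ℕ)) := by
      rintro ⟨h1, h2⟩
      rw [Aux.succ_mod hu] at h1
      rw [Aux.succ_mod hv] at h2
      have hne : (u.1 : ℕ) ≠ (v.1 : ℕ) := fun hh => h (Fin.ext hh)
      split_ifs at h1 h2 <;> omega
    by_cases hA : ((u.1 : ℕ) + 1) % (2 * k) = (v.1 : ℕ) <;>
      by_cases hB : ((v.1 : ℕ) + 1) % (2 * k) = (u.1 : ℕ)
    · exact absurd ⟨hA, hB⟩ key
    · simp [hA, hB]
    · simp [hA, hB]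
    · simp [hA, hB]

lemma D_comm (u v : Fin (2 * k) × Fin 2) : Aux.D u v = Aux.D v u := by
  unfold Aux.D Aux.cd
  rw [min_comm]
  rcases eq_or_ne u.2 v.2 with h | h
  · rw [if_pos h, if_pos h.symm]
  · rw [if_neg h, if_neg (Ne.symm h)]

end Aux2

theorem stmt_13 (k : ℕ) (hk : 2 ≤ k) :
    ∃ c : Sym2 (Fin (2 * k) × Fin 2) → ℕ,
      (∀ u v : Fin (2 * k) × Fin 2,
        c s(u, v) =
          if u.1 = v.1 then k
          else if ((u.1 : ℕ) + 1) % (2 * k) = (v.1 : ℕ) then (u.1 : ℕ) % k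
          else if ((v.1 : ℕ) + 1) % (2 * k) = (u.1 : ℕ) then (v.1 : ℕ) % k
          else 0) ∧
      (∀ e : Sym2 (Fin (2 * k) × Fin 2), c e < k + 1) ∧
      (cycleGraph (2 * k) □ cycleGraph 2).IsStrongRainbowColoring c := by
  have hn2 : 2 ≤ 2 * k := by omega
  haveI : NeZero (2 * k) := ⟨by omega⟩
  refine ⟨Sym2.lift ⟨Aux2.colFun k, Aux2.colFun_symm hk⟩, ?_, ?_, ?_⟩
  · intro u v
    rfl
  · intro e
    induction e using Sym2.ind with
    | _ u v =>
      rw [Sym2.lift_mk]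
      simp only [Aux2.colFun]
      have h1 : (u.1 : ℕ) % k < k := Nat.mod_lt _ (by omega)
      have h2 : (v.1 : ℕ) % k < k := Nat.mod_lt _ (by omega)
      split_ifs <;> omega
  · intro u v hne
    set c : Sym2 (Fin (2 * k) × Fin 2) → ℕ :=
      Sym2.lift ⟨Aux2.colFun k, Aux2.colFun_symm hk⟩ with hcdef
    have hc : ∀ u v : Fin (2 * k) × Fin 2, c s(u, v) = Aux2.colFun k u v :=
      fun _ _ => rfl
    rcases le_or_gt (Aux.δ u.1 v.1) k with hle | hgt
    · obtain ⟨p, h1, h2, h3⟩ := Aux2.half c hc hk hne hle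
      exact ⟨p, h1, by rw [h2, Aux.dist_eq_of hn2 p h2, h2], h3⟩
    · have hle' : Aux.δ v.1 u.1 ≤ k := by
        rcases Aux.delta_add_delta u.1 v.1 with ⟨ha, hb⟩ | hsum <;> omega
      obtain ⟨p, h1, h2, h3⟩ := Aux2.half c hc hk (Ne.symm hne) hle'
      have hlen : p.reverse.length = Aux.D u v := by
        rw [Walk.length_reverse, h2, Aux2.D_comm]
      refine ⟨p.reverse, h1.reverse, ?_, ?_⟩
      · rw [Aux.dist_eq_of hn2 p.reverse hlen]
      · rw [Walk.edges_reverse, List.map_reverse, List.nodup_reverse]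
        exact h3
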